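/- Let F := f₁ + F₂, where F₂: ℝⁿ ⇉ ℝᵐ has closed graph and f₁: ℝⁿ → ℝᵐ is continuously differentiable near x̄ ∈ dom F₂. Then for every ȳ ∈ F(x̄), every pair of directions (u,v) ∈ ℝⁿ × ℝᵐ and every y* ∈ ℝᵐ, D̄*F((x̄,ȳ);(u,v))(y*) = ∇f₁(x̄)ᵀ y* + D̄*F₂((x̄, ȳ − f₁(x̄)); (u, v − ∇f₁(x̄)u))(y*). -/

import Mathlib

open Filter Topology Set ENNReal NNReal

noncomputable section

variable {E Y : Type*} [NormedAddCommGroup E] [NormedSpace ℝ E]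
  [NormedAddCommGroup Y] [NormedSpace ℝ Y]

/-- The tangent (Bouligand) cone to `A` at `x`:
`T_A(x) := {u : ∃ uᵢ → u, tᵢ ↓ 0 with x + tᵢ uᵢ ∈ A}`. -/
def tangentConeB (A : Set E) (x : E) : Set E :=
  {u | ∃ (t : ℕ → ℝ) (c : ℕ → E), (∀ i, 0 < t i) ∧ Tendsto t atTop (𝓝 0) ∧
    Tendsto c atTop (𝓝 u) ∧ ∀ i, x + t i • c i ∈ A}

/-- The Fréchet normal cone to `A` at `x` (empty outside `A`):
the polar of the tangent cone. -/
def frechetNC (A : Set E) (x : E) : Set (E →L[ℝ] ℝ) :=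
  {p | x ∈ A ∧ ∀ u ∈ tangentConeB A x, p u ≤ 0}

/-- The limiting normal cone to `A` at `x`. -/
def limitingNC (A : Set E) (x : E) : Set (E →L[ℝ] ℝ) :=
  {p | ∃ (xs : ℕ → E) (ps : ℕ → E →L[ℝ] ℝ),
    Tendsto xs atTop (𝓝 x) ∧ Tendsto ps atTop (𝓝 p) ∧
    ∀ i, ps i ∈ frechetNC A (xs i)}

/-- The directional limiting normal cone to `A` at `x` in the direction `u`. -/
def dirLimitingNC (A : Set E) (x u : E) : Set (E →L[ℝ] ℝ) :=
  {p | ∃ (t : ℕ → ℝ) (us : ℕ → E) (ps : ℕ → (E →L[ℝ] ℝ)),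
    (∀ i, 0 < t i) ∧ Tendsto t atTop (𝓝 0) ∧ Tendsto us atTop (𝓝 u) ∧
    Tendsto ps atTop (𝓝 p) ∧ ∀ i, ps i ∈ frechetNC A (x + t i • us i)}

/-- `A` is directionally regular at `x` in the direction `u`. -/
def DirRegularAt (A : Set E) (x u : E) : Prop :=
  dirLimitingNC A x u =
    {p | ∀ (t : ℕ → ℝ), (∀ i, 0 < t i) → Tendsto t atTop (𝓝 0) →
      ∃ (us : ℕ → E) (ps : ℕ → (E →L[ℝ] ℝ)), Tendsto us atTop (𝓝 u) ∧
        Tendsto ps atTop (𝓝 p) ∧ ∀ i, ps i ∈ frechetNC A (x + t i • us i)}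

/-- `A` is directionally regular at `x` (in all directions). -/
def DirRegular (A : Set E) (x : E) : Prop := ∀ u, DirRegularAt A x u

/-- The pair `(u*, v*)` viewed as a linear functional on `E × Y`. -/
def pairFun (us : E →L[ℝ] ℝ) (vs : Y →L[ℝ] ℝ) : (E × Y) →L[ℝ] ℝ :=
  us.coprod vs

/-- The primal-dual derivative of the mapping with graph `G` at `z ∈ G`:
`D̂F(xb,yb)(u,v*) := {(u*,v) : (u*,−v*) ∈ N̄_{gph F}((xb,yb);(u,v))}`. -/
def pdDeriv (G : Set (E × Y)) (z : E × Y) (u : E) (vs : Y →L[ℝ] ℝ) :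
    Set ((E →L[ℝ] ℝ) × Y) :=
  {w | pairFun w.1 (-vs) ∈ dirLimitingNC G z (u, w.2)}

/-- `rg[F](xb,yb)`. -/
def rgL (G : Set (E × Y)) (z : E × Y) : ℝ≥0∞ :=
  ⨅ (u : E) (vs : Y →L[ℝ] ℝ) (w : (E →L[ℝ] ℝ) × Y) (_ : ‖u‖ = 1)
    (_ : ‖vs‖ = 1) (_ : w ∈ pdDeriv G z u vs),
    ENNReal.ofReal (max ‖w.1‖ ‖w.2‖)

/-- `rg⋄[F](xb,yb)`. -/
def rgDiamond (G : Set (E × Y)) (z : E × Y) : ℝ≥0∞ :=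
  ⨅ (u : E) (vs : Y →L[ℝ] ℝ) (w : (E →L[ℝ] ℝ) × Y) (_ : ‖u‖ = 1)
    (_ : ‖vs‖ = 1) (_ : w ∈ pdDeriv G z u vs) (_ : w.1 u = vs w.2),
    ENNReal.ofReal (max ‖w.1‖ ‖w.2‖)

/-- `rg°[F](xb,yb)`. -/
def rgCirc (G : Set (E × Y)) (z : E × Y) : ℝ≥0∞ :=
  ⨅ (u : E) (vs : Y →L[ℝ] ℝ) (B : E →L[ℝ] Y) (_ : ‖u‖ = 1) (_ : ‖vs‖ = 1)
    (_ : (vs.comp B, B u) ∈ pdDeriv G z u vs),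
    ENNReal.ofReal ‖B‖

/-- `r̂g[F](xb,yb)`. -/
def rgHat (G : Set (E × Y)) (z : E × Y) : ℝ≥0∞ :=
  ⨅ (u : E) (vs : Y →L[ℝ] ℝ) (w : (E →L[ℝ] ℝ) × Y) (_ : ‖u‖ = 1)
    (_ : ‖vs‖ = 1) (_ : w ∈ pdDeriv G z u vs),
    ENNReal.ofReal (‖w.1‖ + ‖w.2‖)

/-- `rg†[F](xb,yb)` (intended for the Euclidean setting). -/
def rgDagger (G : Set (E × Y)) (z : E × Y) : ℝ≥0∞ :=
  ⨅ (u : E) (vs : Y →L[ℝ] ℝ) (w : (E →L[ℝ] ℝ) × Y) (_ : ‖u‖ = 1)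
    (_ : ‖vs‖ = 1) (_ : w ∈ pdDeriv G z u vs) (_ : w.1 u = vs w.2),
    ENNReal.ofReal (Real.sqrt (‖w.1‖ ^ 2 + ‖w.2‖ ^ 2 - (w.1 u) ^ 2))

/-- Metric subregularity at `xb` for `yb` of the mapping with graph `G`. -/
def MetricSubregAt (G : Set (E × Y)) (xb : E) (yb : Y) : Prop :=
  (xb, yb) ∈ G ∧ ∃ κ : ℝ≥0, ∃ U ∈ 𝓝 xb, ∀ x ∈ U,
    EMetric.infEdist x {x' | (x', yb) ∈ G} ≤
      (κ : ℝ≥0∞) * EMetric.infEdist yb {y | (x, y) ∈ G}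

/-- The graph of `F + h`, where `G` is the graph of `F`. -/
def sumGraph (G : Set (E × Y)) (h : E → Y) : Set (E × Y) :=
  {p | (p.1, p.2 - h p.1) ∈ G}

/-- `h` is Lipschitz continuous around `xb`. -/
def LipschitzAround (h : E → Y) (xb : E) : Prop :=
  ∃ K : ℝ≥0, ∃ U ∈ 𝓝 xb, LipschitzOnWith K h U

/-- The Lipschitz modulus `lip(h;xb)`. -/
def lipMod (h : E → Y) (xb : E) : ℝ≥0∞ :=
  Filter.limsup (fun p : E × E => ENNReal.ofReal (‖h p.1 - h p.2‖ / ‖p.1 - p.2‖))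
    ((𝓝 xb ×ˢ 𝓝 xb) ⊓ 𝓟 {p : E × E | p.1 ≠ p.2})

/-- The radius of metric subregularity w.r.t. Lipschitz perturbations. -/
def radLip (G : Set (E × Y)) (xb : E) (yb : Y) : ℝ≥0∞ :=
  ⨅ (h : E → Y) (_ : LipschitzAround h xb) (_ : h xb = 0)
    (_ : ¬ MetricSubregAt (sumGraph G h) xb yb), lipMod h xb

/-- The Clarke generalized Jacobian of `h` at `x`. -/
def clarkeJac (h : E → Y) (x : E) : Set (E →L[ℝ] Y) :=
  convexHull ℝ {B | ∃ xs : ℕ → E, Tendsto xs atTop (𝓝 x) ∧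
    (∀ i, DifferentiableAt ℝ h (xs i)) ∧
    Tendsto (fun i => fderiv ℝ h (xs i)) atTop (𝓝 B)}

/-- `h` is semismooth at `xb`. -/
def SemismoothAt (h : E → Y) (xb : E) : Prop :=
  LipschitzAround h xb ∧
  ∀ u : E, ∃ L : Y, ∀ (t : ℕ → ℝ) (us : ℕ → E) (V : ℕ → E →L[ℝ] Y),
    (∀ i, 0 < t i) → Tendsto t atTop (𝓝 0) → Tendsto us atTop (𝓝 u) →
    (∀ i, V i ∈ clarkeJac h (xb + t i • us i)) →
    Tendsto (fun i => V i (us i)) atTop (𝓝 L)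

/-- `h` is continuously differentiable around `xb`. -/
def C1Around (h : E → Y) (xb : E) : Prop :=
  ∃ U ∈ 𝓝 xb, ContDiffOn ℝ 1 h U

/-- The radius of metric subregularity w.r.t. semismooth perturbations. -/
def radSS (G : Set (E × Y)) (xb : E) (yb : Y) : ℝ≥0∞ :=
  ⨅ (h : E → Y) (_ : SemismoothAt h xb) (_ : h xb = 0)
    (_ : ¬ MetricSubregAt (sumGraph G h) xb yb), lipMod h xb

/-- The radius of metric subregularity w.r.t. `C¹` perturbations. -/
def radC1 (G : Set (E × Y)) (xb : E) (yb : Y) : ℝ≥0∞ :=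
  ⨅ (h : E → Y) (_ : C1Around h xb) (_ : h xb = 0)
    (_ : ¬ MetricSubregAt (sumGraph G h) xb yb), lipMod h xb


/-- Key limit: difference quotients along `tᵢ ↓ 0`, `cᵢ → u` converge to `A u`. -/
lemma lim_quot {f : E → Y} {A : E →L[ℝ] Y} {x : E} (hf : HasFDerivAt f A x)
    {u : E} {t : ℕ → ℝ} {c : ℕ → E} (ht : ∀ i, 0 < t i)
    (ht0 : Tendsto t atTop (𝓝 0)) (hc : Tendsto c atTop (𝓝 u)) :
    Tendsto (fun i => (t i)⁻¹ • (f (x + t i • c i) - f x)) atTop (𝓝 (A u)) := by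
  have hx : Tendsto (fun i => x + t i • c i) atTop (𝓝 x) := by
    have h1 : Tendsto (fun i => t i • c i) atTop (𝓝 ((0 : ℝ) • u)) := ht0.smul hc
    simpa using tendsto_const_nhds.add h1
  have hlo : (fun i => f (x + t i • c i) - f x - A (t i • c i)) =o[atTop]
      (fun i => t i • c i) := by
    have h2 := hf.isLittleO.comp_tendsto hx
    simp only [Function.comp_def, add_sub_cancel_left] at h2
    exact h2
  have hbo : (fun i => t i • c i) =O[atTop] (fun i => t i) := by
    refine Asymptotics.isBigO_iff.2 ⟨‖u‖ + 1, ?_⟩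
    filter_upwards [hc.norm.eventually_lt_const (lt_add_one ‖u‖)] with i hi
    rw [norm_smul, mul_comm]
    gcongr
  have hlo2 : (fun i => f (x + t i • c i) - f x - A (t i • c i)) =o[atTop]
      (fun i => t i) := hlo.trans_isBigO hbo
  have h0 : Tendsto (fun i => (t i)⁻¹ • (f (x + t i • c i) - f x - A (t i • c i)))
      atTop (𝓝 0) := by
    rw [NormedAddCommGroup.tendsto_nhds_zero]
    intro ε hε
    have hhalf : (0:ℝ) < ε / 2 := by linarith
    filter_upwards [Asymptotics.isLittleO_iff.1 hlo2 hhalf] with i hi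
    have htpos := ht i
    have htn : ‖t i‖ = t i := by rw [Real.norm_eq_abs, abs_of_pos htpos]
    rw [norm_smul, norm_inv, htn]
    rw [inv_mul_lt_iff₀ htpos]
    rw [htn] at hi
    nlinarith
  have hA : Tendsto (fun i => A (c i)) atTop (𝓝 (A u)) :=
    (A.continuous.tendsto u).comp hc
  have key : ∀ i, (t i)⁻¹ • (f (x + t i • c i) - f x)
      = (t i)⁻¹ • (f (x + t i • c i) - f x - A (t i • c i)) + A (c i) := by
    intro i
    have htne : t i ≠ 0 := (ht i).ne'
    have hAs : A (t i • c i) = t i • A (c i) := A.map_smul _ _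
    conv_rhs => rw [hAs, smul_sub, smul_smul, inv_mul_cancel₀ htne, one_smul]
    abel
  have hsum := h0.add hA
  rw [zero_add] at hsum
  exact hsum.congr fun i => (key i).symm

/-- Tangent cone transformation under addition of a differentiable map. -/
lemma tangent_sub (G₂ : Set (E × Y)) (f : E → Y) {A : E →L[ℝ] Y} {x : E} {y : Y}
    (hf : HasFDerivAt f A x) {w : E × Y}
    (hw : w ∈ tangentConeB (sumGraph G₂ f) (x, y)) :
    (w.1, w.2 - A w.1) ∈ tangentConeB G₂ (x, y - f x) := by
  obtain ⟨t, c, ht, ht0, hc, hmem⟩ := hw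
  have hc1 : Tendsto (fun i => (c i).1) atTop (𝓝 w.1) := (continuous_fst.tendsto w).comp hc
  have hc2 : Tendsto (fun i => (c i).2) atTop (𝓝 w.2) := (continuous_snd.tendsto w).comp hc
  refine ⟨t, fun i => ((c i).1, (c i).2 - (t i)⁻¹ • (f (x + t i • (c i).1) - f x)),
    ht, ht0, ?_, ?_⟩
  · exact hc1.prodMk_nhds (hc2.sub (lim_quot hf ht ht0 hc1))
  · intro i
    have htne : t i ≠ 0 := (ht i).ne'
    have heq : (x, y - f x) + t i • ((c i).1,
          (c i).2 - (t i)⁻¹ • (f (x + t i • (c i).1) - f x))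
        = (x + t i • (c i).1, (y + t i • (c i).2) - f (x + t i • (c i).1)) := by
      simp only [Prod.mk_add_mk, Prod.smul_mk, Prod.mk.injEq]
      refine ⟨trivial, ?_⟩
      rw [smul_sub, smul_inv_smul₀ htne]
      abel
    rw [heq]
    exact hmem i

/-- Reverse tangent cone transformation. -/
lemma tangent_add (G₂ : Set (E × Y)) (f : E → Y) {A : E →L[ℝ] Y} {x : E} {y : Y}
    (hf : HasFDerivAt f A x) {w : E × Y}
    (hw : w ∈ tangentConeB G₂ (x, y - f x)) :
    (w.1, w.2 + A w.1) ∈ tangentConeB (sumGraph G₂ f) (x, y) := by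
  have hG : sumGraph (sumGraph G₂ f) (-f) = G₂ := by
    ext p; simp [sumGraph, sub_neg_eq_add]
  have hw' : w ∈ tangentConeB (sumGraph (sumGraph G₂ f) (-f)) (x, y - f x) := by
    rw [hG]; exact hw
  have h2 := tangent_sub (sumGraph G₂ f) (-f) (A := -A) (x := x) (y := y - f x)
    hf.neg hw'
  simp only [Pi.neg_apply, sub_neg_eq_add, sub_add_cancel, ContinuousLinearMap.neg_apply] at h2
  convert h2 using 2

/-- Fréchet normal cone transformation under addition of a differentiable map. -/
lemma frechet_iff (G₂ : Set (E × Y)) (f : E → Y) {A : E →L[ℝ] Y} {x : E} {y : Y}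
    (hf : HasFDerivAt f A x) (p : (E × Y) →L[ℝ] ℝ) :
    p ∈ frechetNC (sumGraph G₂ f) (x, y) ↔
      pairFun (p.comp (ContinuousLinearMap.inl ℝ E Y)
          + (p.comp (ContinuousLinearMap.inr ℝ E Y)).comp A)
        (p.comp (ContinuousLinearMap.inr ℝ E Y)) ∈ frechetNC G₂ (x, y - f x) := by
  have hkey : ∀ w : E × Y,
      (pairFun (p.comp (ContinuousLinearMap.inl ℝ E Y)
          + (p.comp (ContinuousLinearMap.inr ℝ E Y)).comp A)
        (p.comp (ContinuousLinearMap.inr ℝ E Y))) w = p (w.1, w.2 + A w.1) := by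
    intro w
    have hdec : (w.1, w.2 + A w.1) = ((w.1, (0:Y)) + ((0:E), A w.1)) + ((0:E), w.2) := by
      simp [Prod.ext_iff, add_comm]
    rw [hdec, map_add, map_add]
    simp [pairFun]
  constructor
  · rintro ⟨hmem, hineq⟩
    refine ⟨hmem, ?_⟩
    intro w hw
    rw [hkey w]
    exact hineq _ (tangent_add G₂ f hf hw)
  · rintro ⟨hmem, hineq⟩
    refine ⟨hmem, ?_⟩
    intro w hw
    have h2 := hineq _ (tangent_sub G₂ f hf hw)
    rw [hkey] at h2
    simpa using h2

/-- `pairFun` is jointly continuous in its arguments (as a limit statement). -/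
lemma tendsto_pairFun {α : Type*} {l : Filter α} {a : α → E →L[ℝ] ℝ} {b : α → Y →L[ℝ] ℝ}
    {a0 : E →L[ℝ] ℝ} {b0 : Y →L[ℝ] ℝ}
    (ha : Tendsto a l (𝓝 a0)) (hb : Tendsto b l (𝓝 b0)) :
    Tendsto (fun i => pairFun (a i) (b i)) l (𝓝 (pairFun a0 b0)) := by
  have hrw : ∀ (x : E →L[ℝ] ℝ) (y : Y →L[ℝ] ℝ), pairFun x y
      = x.comp (ContinuousLinearMap.fst ℝ E Y) + y.comp (ContinuousLinearMap.snd ℝ E Y) :=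
    fun x y => (ContinuousLinearMap.comp_fst_add_comp_snd x y).symm
  simp_rw [hrw]
  exact ((((ContinuousLinearMap.isBoundedLinearMap_comp_right _).continuous.tendsto _).comp ha).add
    (((ContinuousLinearMap.isBoundedLinearMap_comp_right _).continuous.tendsto _).comp hb))

lemma pairFun_comp_inl (a : E →L[ℝ] ℝ) (b : Y →L[ℝ] ℝ) :
    (pairFun a b).comp (ContinuousLinearMap.inl ℝ E Y) = a := by
  ext x; simp [pairFun]

lemma pairFun_comp_inr (a : E →L[ℝ] ℝ) (b : Y →L[ℝ] ℝ) :
    (pairFun a b).comp (ContinuousLinearMap.inr ℝ E Y) = b := by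
  ext x; simp [pairFun]

/-- One inclusion of the directional limiting coderivative sum rule. -/
lemma dir_incl (G₂ : Set (E × Y)) (f : E → Y) {xb : E}
    (hdiff : ∀ᶠ x in 𝓝 xb, DifferentiableAt ℝ f x)
    (hcont : ContinuousAt (fun x => fderiv ℝ f x) xb)
    {yb : Y} {u : E} {v : Y} {p : (E × Y) →L[ℝ] ℝ}
    (hp : p ∈ dirLimitingNC (sumGraph G₂ f) (xb, yb) (u, v)) :
    pairFun (p.comp (ContinuousLinearMap.inl ℝ E Y)
        + (p.comp (ContinuousLinearMap.inr ℝ E Y)).comp (fderiv ℝ f xb))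
      (p.comp (ContinuousLinearMap.inr ℝ E Y))
      ∈ dirLimitingNC G₂ (xb, yb - f xb) (u, v - fderiv ℝ f xb u) := by
  obtain ⟨t, c, ps, ht, ht0, hc, hps, hmem⟩ := hp
  have hc1 : Tendsto (fun i => (c i).1) atTop (𝓝 u) := (continuous_fst.tendsto _).comp hc
  have hc2 : Tendsto (fun i => (c i).2) atTop (𝓝 v) := (continuous_snd.tendsto _).comp hc
  have hx : Tendsto (fun i => xb + t i • (c i).1) atTop (𝓝 xb) := by
    have h1 : Tendsto (fun i => t i • (c i).1) atTop (𝓝 ((0 : ℝ) • u)) := ht0.smul hc1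
    simpa using tendsto_const_nhds.add h1
  obtain ⟨N, hN⟩ := eventually_atTop.1 (hx.eventually hdiff)
  -- shifted sequences
  set t' : ℕ → ℝ := fun i => t (i + N) with ht'def
  set c' : ℕ → E × Y := fun i => c (i + N) with hc'def
  set ps' : ℕ → (E × Y) →L[ℝ] ℝ := fun i => ps (i + N) with hps'def
  have ht'pos : ∀ i, 0 < t' i := fun i => ht _
  have ht'0 : Tendsto t' atTop (𝓝 0) := (tendsto_add_atTop_iff_nat N).2 ht0
  have hc'1 : Tendsto (fun i => (c' i).1) atTop (𝓝 u) := (tendsto_add_atTop_iff_nat N).2 hc1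
  have hc'2 : Tendsto (fun i => (c' i).2) atTop (𝓝 v) := (tendsto_add_atTop_iff_nat N).2 hc2
  have hps' : Tendsto ps' atTop (𝓝 p) := (tendsto_add_atTop_iff_nat N).2 hps
  have hx' : Tendsto (fun i => xb + t' i • (c' i).1) atTop (𝓝 xb) :=
    (tendsto_add_atTop_iff_nat N).2 hx
  have hdN : ∀ i, DifferentiableAt ℝ f (xb + t' i • (c' i).1) :=
    fun i => hN (i + N) (Nat.le_add_left N i)
  have hfA0 : HasFDerivAt f (fderiv ℝ f xb) xb := (hdiff.self_of_nhds).hasFDerivAt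
  refine ⟨t', fun i => ((c' i).1, (c' i).2 - (t' i)⁻¹ • (f (xb + t' i • (c' i).1) - f xb)),
    fun i => pairFun ((ps' i).comp (ContinuousLinearMap.inl ℝ E Y)
        + ((ps' i).comp (ContinuousLinearMap.inr ℝ E Y)).comp (fderiv ℝ f (xb + t' i • (c' i).1)))
      ((ps' i).comp (ContinuousLinearMap.inr ℝ E Y)),
    ht'pos, ht'0, ?_, ?_, ?_⟩
  · exact hc'1.prodMk_nhds (hc'2.sub (lim_quot hfA0 ht'pos ht'0 hc'1))
  · -- convergence of the transformed normals
    have ha : Tendsto (fun i => (ps' i).comp (ContinuousLinearMap.inl ℝ E Y)) atTop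
        (𝓝 (p.comp (ContinuousLinearMap.inl ℝ E Y))) :=
      (((ContinuousLinearMap.isBoundedLinearMap_comp_right _).continuous.tendsto _).comp hps')
    have hb : Tendsto (fun i => (ps' i).comp (ContinuousLinearMap.inr ℝ E Y)) atTop
        (𝓝 (p.comp (ContinuousLinearMap.inr ℝ E Y))) :=
      (((ContinuousLinearMap.isBoundedLinearMap_comp_right _).continuous.tendsto _).comp hps')
    have hAi : Tendsto (fun i => fderiv ℝ f (xb + t' i • (c' i).1)) atTop
        (𝓝 (fderiv ℝ f xb)) := hcont.tendsto.comp hx'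
    have hbA : Tendsto (fun i => ((ps' i).comp (ContinuousLinearMap.inr ℝ E Y)).comp
          (fderiv ℝ f (xb + t' i • (c' i).1))) atTop
        (𝓝 ((p.comp (ContinuousLinearMap.inr ℝ E Y)).comp (fderiv ℝ f xb))) :=
      (isBoundedBilinearMap_comp.continuous.tendsto _).comp (hb.prodMk_nhds hAi)
    exact tendsto_pairFun (ha.add hbA) hb
  · intro i
    have htne : t' i ≠ 0 := (ht'pos i).ne'
    have heq : (xb, yb - f xb) + t' i • ((c' i).1,
          (c' i).2 - (t' i)⁻¹ • (f (xb + t' i • (c' i).1) - f xb))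
        = (xb + t' i • (c' i).1, (yb + t' i • (c' i).2) - f (xb + t' i • (c' i).1)) := by
      simp only [Prod.mk_add_mk, Prod.smul_mk, Prod.mk.injEq]
      refine ⟨trivial, ?_⟩
      rw [smul_sub, smul_inv_smul₀ htne]
      abel
    rw [heq]
    exact (frechet_iff G₂ f (x := xb + t' i • (c' i).1) (y := yb + t' i • (c' i).2)
      (hdN i).hasFDerivAt (ps' i)).1 (hmem (i + N))

/-- directional limiting coderivative sum rule for `F = f₁ + F₂`
with `f₁` continuously differentiable near `xb`. -/
theorem statement16 [FiniteDimensional ℝ E] [FiniteDimensional ℝ Y]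
    (G₂ : Set (E × Y)) (hG₂ : IsClosed G₂) (f₁ : E → Y) (xb : E)
    (hC1 : ∃ U ∈ 𝓝 xb, ContDiffOn ℝ 1 f₁ U)
    (hdom : ∃ y, (xb, y) ∈ G₂)
    (yb : Y) (hyb : (xb, yb - f₁ xb) ∈ G₂)
    (u : E) (v : Y) (ys : Y →L[ℝ] ℝ) :
    {us : E →L[ℝ] ℝ |
        pairFun us (-ys) ∈
          dirLimitingNC {p : E × Y | (p.1, p.2 - f₁ p.1) ∈ G₂} (xb, yb) (u, v)} =
      (fun q : E →L[ℝ] ℝ => ys.comp (fderiv ℝ f₁ xb) + q) ''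
        {us : E →L[ℝ] ℝ |
          pairFun us (-ys) ∈
            dirLimitingNC G₂ (xb, yb - f₁ xb) (u, v - fderiv ℝ f₁ xb u)} := by
  obtain ⟨U, hU, hcd⟩ := hC1
  have hUo : xb ∈ interior U := mem_interior_iff_mem_nhds.2 hU
  have hcd' : ContDiffOn ℝ 1 f₁ (interior U) := hcd.mono interior_subset
  have hdiff : ∀ᶠ x in 𝓝 xb, DifferentiableAt ℝ f₁ x := by
    filter_upwards [isOpen_interior.mem_nhds hUo] with x hx
    exact (hcd'.differentiableOn one_ne_zero).differentiableAt (isOpen_interior.mem_nhds hx)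
  have hcont : ContinuousAt (fun x => fderiv ℝ f₁ x) xb :=
    (hcd'.continuousOn_fderiv_of_isOpen isOpen_interior le_rfl).continuousAt
      (isOpen_interior.mem_nhds hUo)
  set A₀ := fderiv ℝ f₁ xb with hA₀
  have hGdef : {p : E × Y | (p.1, p.2 - f₁ p.1) ∈ G₂} = sumGraph G₂ f₁ := rfl
  ext us
  simp only [mem_setOf_eq, mem_image]
  constructor
  · intro h
    have h2 := dir_incl G₂ f₁ hdiff hcont (yb := yb) (u := u) (v := v)
      (p := pairFun us (-ys)) h
    rw [pairFun_comp_inl, pairFun_comp_inr, ← hA₀] at h2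
    refine ⟨us - ys.comp A₀, ?_, by abel⟩
    have heq : us + (-ys).comp A₀ = us - ys.comp A₀ := by
      rw [ContinuousLinearMap.neg_comp]; abel
    rwa [heq] at h2
  · rintro ⟨q, hq, rfl⟩
    set G := sumGraph G₂ f₁ with hGdef2
    have hdiff' : ∀ᶠ x in 𝓝 xb, DifferentiableAt ℝ (-f₁) x :=
      hdiff.mono fun x hx => hx.neg
    have hcont' : ContinuousAt (fun x => fderiv ℝ (-f₁) x) xb := by
      have hfe : (fun x => fderiv ℝ (-f₁) x) = fun x => -(fderiv ℝ f₁ x) :=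
        funext fun x => fderiv_neg
      rw [hfe]
      exact hcont.neg
    have hGG : sumGraph G (-f₁) = G₂ := by
      ext p; simp [sumGraph, hGdef2, sub_neg_eq_add]
    have hq' : pairFun q (-ys) ∈ dirLimitingNC (sumGraph G (-f₁))
        (xb, yb - f₁ xb) (u, v - A₀ u) := by
      rw [hGG]; exact hq
    have h3 := dir_incl G (-f₁) hdiff' hcont' (yb := yb - f₁ xb) (u := u)
      (v := v - A₀ u) (p := pairFun q (-ys)) hq'
    rw [pairFun_comp_inl, pairFun_comp_inr, fderiv_neg, ← hA₀] at h3
    have hy : yb - f₁ xb - (-f₁) xb = yb := by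
      simp [sub_neg_eq_add]
    have hv : v - A₀ u - (-fderiv ℝ f₁ xb) u = v := by
      simp [hA₀]
    rw [hy, hv] at h3
    have hfun : q + (-ys).comp (-A₀) = ys.comp A₀ + q := by
      rw [ContinuousLinearMap.comp_neg, ContinuousLinearMap.neg_comp, neg_neg]
      abel
    rwa [hfun] at h3

end
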